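/- Define f(a,b) = (#a)(#b)(#a − #b) for finite point configurations a, b, and the symmetric kernel h((x¹,x²),(y¹,y²)) = f(x¹,y¹)·f(x²,y²) on X² × X². Then (i) for every n and every x₁,…,x_n ∈ X², the empirical centering identity Σ_{i₁,i₂,i₁',i₂'=1}^n h((x_{i₁}¹,x_{i₂}²),(x_{i₁'}¹,x_{i₂'}²)) = 0 holds, and (ii) there exists no function φ : X² → ℝ such that h = h_φ, where h_φ(x,y) = ½(φ(x¹,x²)+φ(y¹,y²)−φ(x¹,y²)−φ(y¹,x²)). -/
import Mathlib


/-- `f(a,b) = (#a)(#b)(#a − #b)`. -/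
noncomputable def fker (a b : Finset ℝ) : ℝ :=
  (a.card : ℝ) * (b.card : ℝ) * ((a.card : ℝ) - (b.card : ℝ))

/-- The symmetric kernel `h((x¹,x²),(y¹,y²)) = f(x¹,y¹)·f(x²,y²)`. -/
noncomputable def hker (x y : Finset ℝ × Finset ℝ) : ℝ := fker x.1 y.1 * fker x.2 y.2

/-- The linear-case kernel `h_φ` associated with a function `φ`. -/
noncomputable def hPhi (φ : Finset ℝ × Finset ℝ → ℝ) (x y : Finset ℝ × Finset ℝ) : ℝ :=
  (φ (x.1, x.2) + φ (y.1, y.2) - φ (x.1, y.2) - φ (y.1, x.2)) / 2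

lemma fker_anti (a b : Finset ℝ) : fker a b = - fker b a := by
  unfold fker; ring

lemma double_sum_fker_zero {n : ℕ} (g : Fin n → Finset ℝ) :
    (∑ i : Fin n, ∑ j : Fin n, fker (g i) (g j)) = 0 := by
  have h : (∑ i : Fin n, ∑ j : Fin n, fker (g i) (g j))
      = - (∑ i : Fin n, ∑ j : Fin n, fker (g i) (g j)) := by
    conv_lhs => rw [Finset.sum_comm]
    rw [← Finset.sum_neg_distrib]
    apply Finset.sum_congr rfl
    intro i _
    rw [← Finset.sum_neg_distrib]
    apply Finset.sum_congr rfl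
    intro j _
    exact (fker_anti (g j) (g i)).trans rfl
  linarith

/-- (i) `hker` satisfies the empirical centering identity for every finite sample, and
(ii) there is no `φ` such that `hker = h_φ`. -/
theorem stmt_7 :
    (∀ (n : ℕ) (x : Fin n → Finset ℝ × Finset ℝ),
      (∑ i1 : Fin n, ∑ i2 : Fin n, ∑ i1' : Fin n, ∑ i2' : Fin n,
        hker ((x i1).1, (x i2).2) ((x i1').1, (x i2').2)) = 0) ∧
    ¬ ∃ φ : Finset ℝ × Finset ℝ → ℝ, ∀ x y : Finset ℝ × Finset ℝ, hker x y = hPhi φ x y := by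
  constructor
  · intro n x
    have : (∑ i1 : Fin n, ∑ i2 : Fin n, ∑ i1' : Fin n, ∑ i2' : Fin n,
        hker ((x i1).1, (x i2).2) ((x i1').1, (x i2').2))
        = (∑ i1 : Fin n, ∑ i1' : Fin n, fker (x i1).1 (x i1').1) *
          (∑ i2 : Fin n, ∑ i2' : Fin n, fker (x i2).2 (x i2').2) := by
      simp only [hker]
      rw [Finset.sum_mul]
      apply Finset.sum_congr rfl
      intro i1 _
      rw [Finset.sum_mul]
      rw [Finset.sum_comm]
      apply Finset.sum_congr rfl
      intro i1' _
      rw [Finset.mul_sum]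
      apply Finset.sum_congr rfl
      intro i2 _
      rw [Finset.mul_sum]
    rw [this, double_sum_fker_zero (fun i => (x i).1), zero_mul]
  · rintro ⟨φ, hφ⟩
    set a : Finset ℝ := {0}
    set b : Finset ℝ := {0, 1}
    set c : Finset ℝ := ∅
    have ha : (a.card : ℝ) = 1 := by simp [a]
    have hb : (b.card : ℝ) = 2 := by
      rw [Finset.card_pair (by norm_num : (0:ℝ) ≠ 1)]; norm_num
    have hc : (c.card : ℝ) = 0 := by simp [c]
    have e1 := hφ (a, a) (b, b)
    have e2 := hφ (a, a) (c, b)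
    have e3 := hφ (b, a) (c, b)
    simp only [hker, hPhi, fker, ha, hb, hc] at e1 e2 e3
    norm_num at e1 e2 e3
    linarith
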